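/- arXiv:1912.10304 — 3 statements merged into one kernel-verified Lean document; each statement's English description precedes it below -/
import Mathlib

section
/- Let d ≥ 2 be an integer and let α < −2/(d−1). For λ > 0 set u_λ = (d κ_d)^{−1/(d−1)} λ^{1/(d−1)} and h_λ = 2 λ^α u_λ² / (1 + λ^α). Then for every fixed h' ∈ (0,1), lim_{λ → ∞} h_λ · φ_{λ,α,u_λ}(h_λ · h') = (2^d κ_{d−1} / κ_d) · ( h'(1−h') )^{(d−1)/2}. -/
open MeasureTheory Real Filter

/-- `kappa j` is the Lebesgue volume of the unit ball in `ℝ^j`. -/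
noncomputable def kappa (j : ℕ) : ℝ :=
  (volume (Metric.ball (0 : EuclideanSpace ℝ (Fin j)) 1)).toReal

/-- Normalized surface area `s₁` of a spherical cap of height `h` (equals `1` for `h > 2`). -/
noncomputable def s1 (d : ℕ) (h : ℝ) : ℝ :=
  if h ≤ 2 then
    (((d : ℝ) - 1) * kappa (d - 1) / ((d : ℝ) * kappa d)) *
      ∫ θ in (0:ℝ)..(Real.arccos (1 - h)), (Real.sin θ) ^ (d - 2)
  else 1

/-- The function `g_{λ,α,u}(h)`. -/
noncomputable def gfun (lam al u h : ℝ) : ℝ :=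
  min (max ((lam ^ al / u ^ 2 * h - (1 / 2) * (1 + lam ^ al) / u ^ 4 * h ^ 2) /
      (1 - h / u ^ 2)) 0) 2

/-- The density `φ_{λ,α,u}(h)`. -/
noncomputable def phi (d : ℕ) (lam al u h : ℝ) : ℝ :=
  lam * (1 + lam ^ al) ^ d / u ^ (d + 1) / (kappa d * lam ^ ((d : ℝ) * al)) *
    s1 d (gfun lam al u h) * (1 - h / u ^ 2) ^ (d - 1)

/-- The scaling factor `u_λ = (d κ_d)^{-1/(d-1)} λ^{1/(d-1)}` for `α < -2/(d-1)`. -/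
noncomputable def uSub (d : ℕ) (lam : ℝ) : ℝ :=
  ((d : ℝ) * kappa d) ^ (-(1 : ℝ) / ((d : ℝ) - 1)) * lam ^ ((1 : ℝ) / ((d : ℝ) - 1))

/-- The maximal height `h_λ = 2 λ^α u_λ² / (1 + λ^α)`. -/
noncomputable def hSub (d : ℕ) (al lam : ℝ) : ℝ :=
  2 * lam ^ al * uSub d lam ^ 2 / (1 + lam ^ al)

/-! ### Auxiliary lemmas -/

lemma kappa_pos (j : ℕ) : 0 < kappa j := by
  unfold kappa
  refine ENNReal.toReal_pos ?_ ?_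
  · exact (Metric.measure_ball_pos volume 0 one_pos).ne'
  · exact (measure_ball_lt_top).ne

lemma sinc_lim : Tendsto (fun θ : ℝ => Real.sin θ / θ) (nhdsWithin 0 (Set.Ioi 0)) (nhds 1) := by
  have h := (Real.hasDerivAt_sin 0)
  rw [Real.cos_zero, hasDerivAt_iff_tendsto_slope] at h
  have h2 : Tendsto (slope Real.sin 0) (nhdsWithin 0 (Set.Ioi 0)) (nhds 1) :=
    h.mono_left (nhdsWithin_mono 0 (fun x hx => ne_of_gt hx))
  refine h2.congr (fun θ => ?_)
  simp [slope_def_field, div_eq_mul_inv]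

lemma intlim (k : ℕ) :
    Tendsto (fun θ : ℝ => (∫ x in (0:ℝ)..θ, Real.sin x ^ k) / θ ^ (k+1))
      (nhdsWithin 0 (Set.Ioi 0)) (nhds (1/(k+1))) := by
  have hcont : Continuous fun x : ℝ => Real.sin x ^ k := (Real.continuous_sin.pow k)
  apply HasDerivAt.lhopital_zero_nhdsGT (f' := fun θ => Real.sin θ ^ k)
    (g' := fun θ => (k+1) * θ ^ k)
  · filter_upwards with θ
    exact intervalIntegral.integral_hasDerivAt_right (hcont.intervalIntegrable _ _)
      (hcont.stronglyMeasurableAtFilter _ _) hcont.continuousAt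
  · filter_upwards with θ
    have := hasDerivAt_pow (k+1) θ
    simpa using this
  · filter_upwards [self_mem_nhdsWithin] with θ (hθ : 0 < θ)
    positivity
  · have : Tendsto (fun θ : ℝ => ∫ x in (0:ℝ)..θ, Real.sin x ^ k) (nhds 0)
        (nhds (∫ x in (0:ℝ)..(0:ℝ), Real.sin x ^ k)) :=
      (intervalIntegral.continuous_primitive (fun a b => hcont.intervalIntegrable a b) 0).tendsto 0
    simpa using this.mono_left nhdsWithin_le_nhds
  · have : Tendsto (fun θ : ℝ => θ ^ (k+1)) (nhds 0) (nhds ((0:ℝ) ^ (k+1))) :=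
      (continuous_pow (k+1)).tendsto 0
    simpa using this.mono_left nhdsWithin_le_nhds
  · have h1 : Tendsto (fun θ : ℝ => (Real.sin θ / θ) ^ k / (k+1)) (nhdsWithin 0 (Set.Ioi 0))
        (nhds (1/(k+1))) := by
      simpa using (sinc_lim.pow k).div_const ((k:ℝ)+1)
    refine h1.congr' ?_
    filter_upwards [self_mem_nhdsWithin] with θ (hθ : 0 < θ)
    rw [div_pow, div_div, mul_comm]

lemma coslim : Tendsto (fun θ : ℝ => θ^2 / (1 - Real.cos θ)) (nhdsWithin 0 (Set.Ioi 0)) (nhds 2) := by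
  have hhalf : Tendsto (fun θ : ℝ => θ / 2) (nhdsWithin 0 (Set.Ioi 0)) (nhdsWithin 0 (Set.Ioi 0)) := by
    apply tendsto_nhdsWithin_of_tendsto_nhds_of_eventually_within
    · have : Tendsto (fun θ : ℝ => θ / 2) (nhds 0) (nhds (0/2)) :=
        (tendsto_id (α := ℝ)).div_const 2
      simpa using this.mono_left nhdsWithin_le_nhds
    · filter_upwards [self_mem_nhdsWithin] with θ (hθ : 0 < θ)
      exact half_pos hθ
  have hinv : Tendsto (fun θ : ℝ => θ / Real.sin θ) (nhdsWithin 0 (Set.Ioi 0)) (nhds 1) := by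
    have := sinc_lim.inv₀ one_ne_zero
    simpa [inv_div] using this
  have hmain : Tendsto (fun θ : ℝ => 2 * ((θ/2) / Real.sin (θ/2))^2) (nhdsWithin 0 (Set.Ioi 0))
      (nhds (2 * 1^2)) := (((hinv.comp hhalf).pow 2).const_mul 2)
  have hmain' : Tendsto (fun θ : ℝ => 2 * ((θ/2) / Real.sin (θ/2))^2) (nhdsWithin 0 (Set.Ioi 0))
      (nhds 2) := by simpa using hmain
  refine hmain'.congr' ?_
  filter_upwards [Ioo_mem_nhdsGT_of_mem (Set.left_mem_Ico.mpr Real.pi_pos)] with θ hθ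
  have hθ0 : 0 < θ := hθ.1
  have hs : 0 < Real.sin (θ/2) :=
    Real.sin_pos_of_pos_of_lt_pi (half_pos hθ0) (by linarith [hθ.2, Real.pi_pos])
  have hc : 1 - Real.cos θ = 2 * Real.sin (θ/2)^2 := by
    have := Real.sin_sq_eq_half_sub (θ/2)
    rw [this]
    ring_nf
  rw [hc]
  field_simp

lemma caplim (k : ℕ) :
    Tendsto (fun t : ℝ => (∫ x in (0:ℝ)..Real.arccos (1-t), Real.sin x ^ k) / t ^ (((k:ℝ)+1)/2))
      (nhdsWithin 0 (Set.Ioi 0))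
      (nhds ((2:ℝ) ^ (((k:ℝ)+1)/2) / ((k:ℝ)+1))) := by
  set p : ℝ := ((k:ℝ)+1)/2 with hp
  have harc : Tendsto (fun t : ℝ => Real.arccos (1-t)) (nhdsWithin 0 (Set.Ioi 0))
      (nhdsWithin 0 (Set.Ioi 0)) := by
    apply tendsto_nhdsWithin_of_tendsto_nhds_of_eventually_within
    · have : Tendsto (fun t : ℝ => Real.arccos (1-t)) (nhds 0) (nhds (Real.arccos (1-0))) :=
        (Real.continuous_arccos.comp (continuous_const.sub continuous_id)).tendsto 0
      simpa using this.mono_left nhdsWithin_le_nhds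
    · filter_upwards [self_mem_nhdsWithin] with t (ht : 0 < t)
      exact Real.arccos_pos.mpr (by linarith)
  have hR : Tendsto (fun θ : ℝ =>
      ((∫ x in (0:ℝ)..θ, Real.sin x ^ k) / θ ^ (k+1)) * (θ^2 / (1 - Real.cos θ)) ^ p)
      (nhdsWithin 0 (Set.Ioi 0)) (nhds (1/((k:ℝ)+1) * 2 ^ p)) := by
    refine (intlim k).mul ?_
    exact ((Real.continuousAt_rpow_const 2 p (Or.inl two_ne_zero)).tendsto.comp coslim)
  have hcomp := hR.comp harc
  have hval : 1/((k:ℝ)+1) * 2 ^ p = (2:ℝ) ^ p / ((k:ℝ)+1) := by ring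
  rw [hval] at hcomp
  refine hcomp.congr' ?_
  filter_upwards [Ioo_mem_nhdsGT_of_mem (Set.left_mem_Ico.mpr two_pos)] with t ht
  obtain ⟨ht0, ht2⟩ := ht
  set θ := Real.arccos (1-t) with hθdef
  have hθ0 : 0 < θ := Real.arccos_pos.mpr (by linarith)
  have hcos : Real.cos θ = 1 - t := Real.cos_arccos (by linarith) (by linarith)
  have htcos : 1 - Real.cos θ = t := by rw [hcos]; ring
  have hpow : ((θ:ℝ)^2) ^ p = θ ^ (k+1) := by
    rw [← Real.rpow_natCast θ 2, ← Real.rpow_natCast θ (k+1), ← Real.rpow_mul hθ0.le]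
    congr 1
    push_cast [hp]
    ring
  have hdiv : (θ^2 / (1 - Real.cos θ)) ^ p = θ ^ (k+1) / t ^ p := by
    rw [htcos, div_rpow (sq_nonneg θ) ht0.le, hpow]
  show ((∫ x in (0:ℝ)..θ, Real.sin x ^ k) / θ ^ (k+1)) * (θ^2 / (1 - Real.cos θ)) ^ p
      = (∫ x in (0:ℝ)..θ, Real.sin x ^ k) / t ^ p
  rw [hdiv]
  have hθne : (θ:ℝ) ^ (k+1) ≠ 0 := by positivity
  field_simp

lemma s1lim (d : ℕ) (hd : 2 ≤ d) :
    Tendsto (fun t : ℝ => s1 d t / t ^ (((d:ℝ)-1)/2)) (nhdsWithin 0 (Set.Ioi 0))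
      (nhds ((2:ℝ) ^ (((d:ℝ)-1)/2) * kappa (d-1) / ((d:ℝ) * kappa d))) := by
  have hcast : ((d-2:ℕ):ℝ) + 1 = (d:ℝ) - 1 := by
    rw [Nat.cast_sub hd]; ring
  have hd1 : (0:ℝ) < (d:ℝ) - 1 := by
    have : (2:ℝ) ≤ (d:ℝ) := by exact_mod_cast hd
    linarith
  set C : ℝ := ((d : ℝ) - 1) * kappa (d - 1) / ((d : ℝ) * kappa d) with hC
  have h0 := (caplim (d-2)).const_mul C
  simp only [hcast] at h0
  have hval : C * ((2:ℝ) ^ (((d:ℝ)-1)/2) / ((d:ℝ)-1))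
      = (2:ℝ) ^ (((d:ℝ)-1)/2) * kappa (d-1) / ((d:ℝ) * kappa d) := by
    rw [hC]
    have hdk : ((d:ℝ)) * kappa d ≠ 0 := by
      have := kappa_pos d; positivity
    field_simp
  rw [hval] at h0
  refine h0.congr' ?_
  filter_upwards [Ioo_mem_nhdsGT_of_mem (Set.left_mem_Ico.mpr two_pos)] with t ht
  rw [s1, if_pos ht.2.le, mul_div_assoc]

/-- The rescaled height ratio `h_λ h'/u_λ²` as a function of `a = λ^α`. -/
noncomputable def rr (h' a : ℝ) : ℝ := 2*a*h'/(1+a)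

/-- The value of `g_{λ,α,u_λ}(h_λ h')` as a function of `a = λ^α`. -/
noncomputable def AA (h' a : ℝ) : ℝ := 2*a^2*(h'*(1-h'))/((1+a)*(1-rr h' a))

/-- `AA` rescaled by `a⁻²`. -/
noncomputable def BB (h' a : ℝ) : ℝ := 2*(h'*(1-h'))/((1+a)*(1-rr h' a))

/-- The full rescaled expression as a function of `a = λ^α`. -/
noncomputable def GG (d : ℕ) (h' a : ℝ) : ℝ :=
  2*(d:ℝ)*(1+a)^(d-1) * (s1 d (AA h' a) / (AA h' a)^(((d:ℝ)-1)/2)) *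
    (BB h' a)^(((d:ℝ)-1)/2) * (1-rr h' a)^(d-1)

lemma rr_contAt (h' : ℝ) : ContinuousAt (rr h') 0 := by
  unfold rr
  exact ContinuousAt.div (by fun_prop) (by fun_prop) (by norm_num)

lemma rr_zero (h' : ℝ) : rr h' 0 = 0 := by simp [rr]

lemma AA_contAt (h' : ℝ) : ContinuousAt (AA h') 0 := by
  unfold AA
  refine ContinuousAt.div (by fun_prop) ?_ ?_
  · exact ((continuousAt_const.add continuousAt_id).mul (continuousAt_const.sub (rr_contAt h')))
  · rw [rr_zero]; norm_num

lemma AA_zero (h' : ℝ) : AA h' 0 = 0 := by simp [AA]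

lemma GGlim (d : ℕ) (hd : 2 ≤ d) (h' : ℝ) (h'0 : 0 < h') (h'1 : h' < 1) :
    Tendsto (GG d h') (nhdsWithin 0 (Set.Ioi 0))
      (nhds ((2:ℝ) ^ d * kappa (d-1) / kappa d * (h' * (1-h')) ^ (((d:ℝ)-1)/2))) := by
  have hdk : ((d-1:ℕ):ℝ) = (d:ℝ) - 1 := by
    rw [Nat.cast_sub (by omega : 1 ≤ d)]; norm_num
  have hd1 : (0:ℝ) < (d:ℝ) - 1 := by
    have : (2:ℝ) ≤ (d:ℝ) := by exact_mod_cast hd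
    linarith
  have hκd := kappa_pos d
  have hκd1 := kappa_pos (d-1)
  have hh' : 0 < h' * (1-h') := mul_pos h'0 (by linarith)
  set p : ℝ := ((d:ℝ)-1)/2 with hp
  have hrT : Tendsto (rr h') (nhds 0) (nhds 0) := by
    have := (rr_contAt h').tendsto
    rwa [rr_zero] at this
  have hDC : ContinuousAt (fun a : ℝ => (1+a)*(1-rr h' a)) 0 :=
    ((continuousAt_const.add continuousAt_id).mul (continuousAt_const.sub (rr_contAt h')))
  have hD0 : ((1:ℝ)+0)*(1-rr h' 0) = 1 := by rw [rr_zero]; norm_num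
  have hBC : ContinuousAt (BB h') 0 := by
    unfold BB
    exact ContinuousAt.div (by fun_prop) hDC (by rw [hD0]; norm_num)
  have hB0 : BB h' 0 = 2*(h'*(1-h')) := by simp [BB, rr_zero]
  have h1r : ∀ᶠ a in nhdsWithin 0 (Set.Ioi 0), 0 < 1 - rr h' a := by
    have := (hrT.mono_left (nhdsWithin_le_nhds (s := Set.Ioi 0))).eventually_lt_const one_pos
    filter_upwards [this] with a ha
    linarith
  have hApos : ∀ᶠ a in nhdsWithin 0 (Set.Ioi 0), 0 < AA h' a := by
    filter_upwards [h1r, self_mem_nhdsWithin] with a h1 (h2 : 0 < a)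
    rw [AA]
    exact div_pos (by positivity) (mul_pos (by linarith) h1)
  have hAin : Tendsto (AA h') (nhdsWithin 0 (Set.Ioi 0)) (nhdsWithin 0 (Set.Ioi 0)) := by
    rw [tendsto_nhdsWithin_iff]
    constructor
    · have := (AA_contAt h').tendsto
      rw [AA_zero] at this
      exact this.mono_left nhdsWithin_le_nhds
    · exact hApos
  have hT1 : Tendsto (fun a => s1 d (AA h' a) / (AA h' a) ^ p) (nhdsWithin 0 (Set.Ioi 0))
      (nhds ((2:ℝ) ^ p * kappa (d-1) / ((d:ℝ) * kappa d))) := (s1lim d hd).comp hAin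
  have hT2 : Tendsto (fun a => (BB h' a) ^ p) (nhdsWithin 0 (Set.Ioi 0))
      (nhds ((2*(h'*(1-h'))) ^ p)) := by
    have hc : ContinuousAt (fun a => (BB h' a) ^ p) 0 := by
      have := (Real.continuousAt_rpow_const (BB h' 0) p
        (Or.inl (by rw [hB0]; positivity))).comp hBC
      exact this
    have := hc.tendsto
    rw [hB0] at this
    exact this.mono_left nhdsWithin_le_nhds
  have hT3 : Tendsto (fun a : ℝ => 2*(d:ℝ)*(1+a)^(d-1)) (nhdsWithin 0 (Set.Ioi 0))
      (nhds (2*(d:ℝ))) := by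
    have : ContinuousAt (fun a : ℝ => 2*(d:ℝ)*(1+a)^(d-1)) 0 := by fun_prop
    have h := this.tendsto
    simp only [add_zero, one_pow, mul_one] at h
    exact h.mono_left nhdsWithin_le_nhds
  have hT4 : Tendsto (fun a : ℝ => (1-rr h' a)^(d-1)) (nhdsWithin 0 (Set.Ioi 0)) (nhds 1) := by
    have : Tendsto (fun a : ℝ => (1-rr h' a)^(d-1)) (nhds 0) (nhds ((1 - rr h' 0)^(d-1))) :=
      ((continuousAt_const.sub (rr_contAt h')).pow (d-1)).tendsto
    rw [rr_zero] at this
    simpa using this.mono_left nhdsWithin_le_nhds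
  have hprod := ((hT3.mul hT1).mul hT2).mul hT4
  have h2p : (2:ℝ)^p * (2:ℝ)^p = 2^(d-1) := by
    rw [← Real.rpow_add two_pos, ← Real.rpow_natCast 2 (d-1)]
    congr 1
    rw [hdk, hp]; ring
  have h2d : (2:ℝ)^d = 2 * 2^(d-1) := by
    rw [← pow_succ']
    congr 1
    omega
  have hval : 2*(d:ℝ) * ((2:ℝ)^p * kappa (d-1) / ((d:ℝ)*kappa d)) * ((2*(h'*(1-h')))^p) * 1
      = (2:ℝ)^d * kappa (d-1) / kappa d * (h'*(1-h'))^p := by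
    have hd0 : (d:ℝ) ≠ 0 := by positivity
    rw [Real.mul_rpow (by norm_num : (0:ℝ) ≤ 2) hh'.le, mul_one, h2d]
    field_simp
    linear_combination h2p
  rw [hval] at hprod
  refine hprod.congr (fun a => ?_)
  rw [GG, ← hp]

lemma eq_lemma (d : ℕ) (hd : 2 ≤ d) (al : ℝ) (h' : ℝ) (h'0 : 0 < h') (h'1 : h' < 1)
    (lam : ℝ) (hlam : 0 < lam) (hr1 : rr h' (lam^al) < 1) (hA2 : AA h' (lam^al) < 2) :
    hSub d al lam * phi d lam al (uSub d lam) (hSub d al lam * h') = GG d h' (lam ^ al) := by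
  have hdk : ((d-1:ℕ):ℝ) = (d:ℝ) - 1 := by
    rw [Nat.cast_sub (by omega : 1 ≤ d)]; norm_num
  have hd1 : (0:ℝ) < (d:ℝ) - 1 := by
    have : (2:ℝ) ≤ (d:ℝ) := by exact_mod_cast hd
    linarith
  have hκd := kappa_pos d
  have hdκ : (0:ℝ) < (d:ℝ) * kappa d := by positivity
  set a := lam ^ al with ha
  have ha0 : 0 < a := Real.rpow_pos_of_pos hlam al
  have h1a : (0:ℝ) < 1 + a := by linarith
  have h1r : (0:ℝ) < 1 - rr h' a := by linarith
  have hu : 0 < uSub d lam := mul_pos (Real.rpow_pos_of_pos hdκ _) (Real.rpow_pos_of_pos hlam _)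
  set u := uSub d lam with hu'
  have hh' : 0 < h' * (1-h') := mul_pos h'0 (by linarith)
  have hApos : 0 < AA h' a := by
    rw [AA]
    exact div_pos (by positivity) (mul_pos h1a h1r)
  set p : ℝ := ((d:ℝ)-1)/2 with hp
  have hlal : (0:ℝ) < lam ^ ((d:ℝ)*al) := Real.rpow_pos_of_pos hlam _
  have hru : hSub d al lam * h' / u ^ 2 = rr h' a := by
    rw [hSub, rr, ← hu', ← ha]
    field_simp
  have hgA : gfun lam al u (hSub d al lam * h') = AA h' a := by
    have hnum : lam ^ al / u ^ 2 * (hSub d al lam * h') -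
        (1/2) * (1 + lam ^ al) / u ^ 4 * (hSub d al lam * h') ^ 2
        = 2*a^2*(h'*(1-h'))/(1+a) := by
      rw [hSub, ← hu', ← ha]
      field_simp
    rw [gfun, hnum, hru]
    have hAA : AA h' a = 2*a^2*(h'*(1-h'))/(1+a) / (1 - rr h' a) := by
      rw [AA, div_div]
    rw [← hAA, max_eq_left hApos.le, min_eq_left hA2.le]
  have hud : u^(d+1) = u^2 * (lam / ((d:ℝ)*kappa d)) := by
    have h1 : u^(d+1) = u^2 * u^(d-1) := by rw [← pow_add]; congr 1; omega
    have h2 : u^(d-1) = lam / ((d:ℝ)*kappa d) := by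
      rw [hu', uSub, mul_pow,
        ← Real.rpow_natCast (((d:ℝ)*kappa d) ^ (-(1:ℝ)/((d:ℝ)-1))) (d-1),
        ← Real.rpow_natCast (lam ^ ((1:ℝ)/((d:ℝ)-1))) (d-1),
        ← Real.rpow_mul hdκ.le, ← Real.rpow_mul hlam.le, hdk,
        div_mul_cancel₀ _ hd1.ne', div_mul_cancel₀ _ hd1.ne',
        Real.rpow_neg_one, Real.rpow_one, inv_mul_eq_div]
    rw [h1, h2]
  have hP : hSub d al lam * (lam * (1 + lam ^ al) ^ d / u ^ (d+1) / (kappa d * lam ^ ((d:ℝ)*al)))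
      = 2*(d:ℝ)*(1+a)^(d-1) * (a / lam ^ ((d:ℝ)*al)) := by
    rw [hSub, hud, ← hu', ← ha]
    have hpow : (1+a)^d = (1+a)^(d-1)*(1+a) := by rw [← pow_succ]; congr 1; omega
    rw [hpow]
    field_simp
  have hBA : BB h' a = lam ^ ((-2)*al) * AA h' a := by
    have hx : lam ^ ((-2)*al) = (a^2)⁻¹ := by
      rw [mul_comm, Real.rpow_mul hlam.le, ← ha, Real.rpow_neg ha0.le, Real.rpow_two]
    rw [hx, AA, BB]
    field_simp
  have hBApow : (BB h' a) ^ p = lam ^ (al - (d:ℝ)*al) * (AA h' a) ^ p := by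
    rw [hBA, Real.mul_rpow (Real.rpow_pos_of_pos hlam _).le hApos.le,
      ← Real.rpow_mul hlam.le]
    congr 2
    rw [hp]; ring
  have haq : a / lam ^ ((d:ℝ)*al) = lam ^ (al - (d:ℝ)*al) := by
    rw [Real.rpow_sub hlam, ha]
  have hAp : (0:ℝ) < (AA h' a) ^ p := Real.rpow_pos_of_pos hApos p
  have hRHS : GG d h' a = 2*(d:ℝ)*(1+a)^(d-1) * s1 d (AA h' a) * (a / lam ^ ((d:ℝ)*al)) *
      (1 - rr h' a)^(d-1) := by
    rw [GG, ← hp, hBApow, haq]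
    field_simp
  rw [hRHS, phi, hgA, hru]
  linear_combination (s1 d (AA h' a) * (1 - rr h' a)^(d-1)) * hP

/-- for `α < -2/(d-1)`, `u_λ = (d κ_d)^{-1/(d-1)} λ^{1/(d-1)}` and
`h_λ = 2 λ^α u_λ²/(1+λ^α)`, for every fixed `h' ∈ (0,1)` one has
`h_λ φ_{λ,α,u_λ}(h_λ h') → (2^d κ_{d-1}/κ_d) (h'(1-h'))^{(d-1)/2}`. -/
theorem phi_limit_subcritical_extreme (d : ℕ) (hd : 2 ≤ d) (al : ℝ)
    (hal : al < -2 / ((d : ℝ) - 1)) (h' : ℝ) (h'0 : 0 < h') (h'1 : h' < 1) :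
    Tendsto (fun lam : ℝ => hSub d al lam * phi d lam al (uSub d lam) (hSub d al lam * h'))
      atTop
      (nhds ((2 : ℝ) ^ d * kappa (d - 1) / kappa d * (h' * (1 - h')) ^ (((d : ℝ) - 1) / 2))) := by
  have hd1 : (0:ℝ) < (d:ℝ) - 1 := by
    have : (2:ℝ) ≤ (d:ℝ) := by exact_mod_cast hd
    linarith
  have hal0 : al < 0 := lt_trans hal (div_neg_of_neg_of_pos (by norm_num) hd1)
  have halT : Tendsto (fun lam : ℝ => lam ^ al) atTop (nhds 0) := by
    have := tendsto_rpow_neg_atTop (neg_pos.mpr hal0)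
    simpa [neg_neg] using this
  have hpos : ∀ᶠ lam : ℝ in atTop, 0 < lam := eventually_gt_atTop 0
  have hain : Tendsto (fun lam : ℝ => lam ^ al) atTop (nhdsWithin 0 (Set.Ioi 0)) := by
    rw [tendsto_nhdsWithin_iff]
    exact ⟨halT, hpos.mono fun lam h => Real.rpow_pos_of_pos h al⟩
  have hcomp := (GGlim d hd h' h'0 h'1).comp hain
  refine Tendsto.congr' ?_ hcomp
  have hrs : ∀ᶠ lam : ℝ in atTop, rr h' (lam ^ al) < 1 := by
    have h1 : Tendsto (fun lam : ℝ => rr h' (lam ^ al)) atTop (nhds (rr h' 0)) :=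
      (rr_contAt h').tendsto.comp halT
    rw [rr_zero] at h1
    exact h1.eventually_lt_const one_pos
  have hAs : ∀ᶠ lam : ℝ in atTop, AA h' (lam ^ al) < 2 := by
    have h1 : Tendsto (fun lam : ℝ => AA h' (lam ^ al)) atTop (nhds (AA h' 0)) :=
      (AA_contAt h').tendsto.comp halT
    rw [AA_zero] at h1
    exact h1.eventually_lt_const two_pos
  filter_upwards [hpos, hrs, hAs] with lam h1 h2 h3
  exact (eq_lemma d hd al h' h'0 h'1 lam h1 h2 h3).symm
end

section
/- Let d ≥ 2 be an integer, u > 0, h₀ ≥ 0, h₁ ∈ ℝ, and v₁ ∈ ℝ^{d−1} with |v₁| ≤ u·π. If h₁ ≥ u²·(1 − cos(|v₁|/u)) + h₀·cos(|v₁|/u) (i.e., the point (v₁,h₁) lies in the quasi up-paraboloid with apex (0,h₀) and scale u), then |v₁| ≤ 2√2 · √(h₀ + h₁). -/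
open Real

/-- Lemma 3.1 (i): if `(v₁, h₁)` lies in the quasi up-paraboloid with apex
`(0, h₀)` and scale `u`, then `|v₁| ≤ 2√2 √(h₀ + h₁)`. -/
theorem quasi_up_paraboloid_diameter (d : ℕ) (hd : 2 ≤ d) (u h₀ h₁ : ℝ)
    (hu : 0 < u) (hh₀ : 0 ≤ h₀) (v₁ : EuclideanSpace ℝ (Fin (d - 1)))
    (hv : ‖v₁‖ ≤ u * π)
    (hmem : u ^ 2 * (1 - Real.cos (‖v₁‖ / u)) + h₀ * Real.cos (‖v₁‖ / u) ≤ h₁) :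
    ‖v₁‖ ≤ 2 * Real.sqrt 2 * Real.sqrt (h₀ + h₁) := by
  set θ := ‖v₁‖ / u with hθdef
  have hθ0 : 0 ≤ θ := div_nonneg (norm_nonneg _) hu.le
  have hθπ : θ ≤ π := by
    rw [div_le_iff₀' hu] at *
    exact hv
  have hc : Real.cos θ ≤ 1 - 2 / π ^ 2 * θ ^ 2 :=
    Real.cos_le_one_sub_mul_cos_sq (by rwa [abs_of_nonneg hθ0])
  have hc1 : -1 ≤ Real.cos θ := Real.neg_one_le_cos θ
  have hr : ‖v₁‖ = u * θ := by rw [hθdef]; field_simp [hu.ne']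
  have hπ4 : π ≤ 4 := Real.pi_le_four
  have hπ0 : 0 < π := Real.pi_pos
  have key : ‖v₁‖ ^ 2 ≤ 8 * (h₀ + h₁) := by
    rw [hr]
    have h1 : 2 / π ^ 2 * θ ^ 2 * u ^ 2 ≤ h₀ + h₁ := by nlinarith [sq_nonneg u, sq_nonneg θ]
    rw [div_mul_eq_mul_div, div_mul_eq_mul_div, div_le_iff₀ (by positivity)] at h1
    have hsum0 : 0 ≤ h₀ + h₁ := by nlinarith [mul_nonneg (sq_nonneg θ) (sq_nonneg u), mul_pos hπ0 hπ0, sq_nonneg π]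
    have hπsq : π ^ 2 ≤ 16 := by nlinarith
    nlinarith [mul_nonneg hsum0 (by linarith : (0:ℝ) ≤ 16 - π ^ 2)]
  have hsum : 0 ≤ h₀ + h₁ := by nlinarith [sq_nonneg ‖v₁‖]
  calc ‖v₁‖ = Real.sqrt (‖v₁‖ ^ 2) := (Real.sqrt_sq (norm_nonneg _)).symm
    _ ≤ Real.sqrt (8 * (h₀ + h₁)) := Real.sqrt_le_sqrt key
    _ = 2 * Real.sqrt 2 * Real.sqrt (h₀ + h₁) := by
        have h8 : Real.sqrt ((2:ℝ) ^ 2 * 2) = 2 * Real.sqrt 2 := by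
          rw [Real.sqrt_mul (by positivity), Real.sqrt_sq (by norm_num : (0:ℝ) ≤ 2)]
        rw [show (8 : ℝ) * (h₀ + h₁) = 2 ^ 2 * 2 * (h₀ + h₁) by ring,
          Real.sqrt_mul (by positivity), h8]
end

section
/- Let d ≥ 2 be an integer and let α ∈ (0, 2/(d+1)). Set β = (2 + α(d−1))/(4d) and C₀ = (2^{(d−1)/2} κ_{d−1} / (d κ_d²))^{1/(2d)}, and for λ > 0 set u_λ = C₀ λ^β. Then there exists a constant C > 0 (depending only on d and α) such that for all λ ≥ 1 and all h ∈ [0, u_λ²), φ_{λ,α,u_λ}(h) ≤ C · h^{(d−1)/2}. -/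
open MeasureTheory Real Filter

lemma s1_le (d : ℕ) (hd : 2 ≤ d) {g : ℝ} (hg0 : 0 ≤ g) (hg2 : g ≤ 2) :
    s1 d g ≤ (((d : ℝ) - 1) * kappa (d - 1) / ((d : ℝ) * kappa d)) / ((d : ℝ) - 1) *
      (π ^ 2 / 2) ^ (((d : ℝ) - 1) / 2) * g ^ (((d : ℝ) - 1) / 2) := by
  have hd1 : (1:ℝ) ≤ (d:ℝ) - 1 := by
    have : (2:ℝ) ≤ (d:ℝ) := by exact_mod_cast hd
    linarith
  have hk1 := kappa_pos (d - 1)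
  have hk2 := kappa_pos d
  have hd0 : (0:ℝ) < d := by positivity
  set p : ℝ := ((d : ℝ) - 1) / 2 with hp
  have hp0 : 0 < p := by rw [hp]; linarith
  set T : ℝ := Real.arccos (1 - g) with hT
  have hT0 : 0 ≤ T := Real.arccos_nonneg _
  have hTpi : T ≤ π := Real.arccos_le_pi _
  have hcos : Real.cos T = 1 - g := Real.cos_arccos (by linarith) (by linarith)
  have hT2 : T ^ 2 ≤ π ^ 2 / 2 * g := by
    have h1 := Real.cos_le_one_sub_mul_cos_sq (x := T) (by rw [abs_of_nonneg hT0]; exact hTpi)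
    rw [hcos] at h1
    have hπ : 0 < π ^ 2 := by positivity
    have h2 : 2 * T ^ 2 / π ^ 2 ≤ g := by
      rw [← div_mul_eq_mul_div]
      linarith
    rw [div_le_iff₀ hπ] at h2
    linarith
  have hcast : ((d - 1 : ℕ) : ℝ) = (d : ℝ) - 1 := by
    have : 1 ≤ d := by omega
    push_cast [Nat.cast_sub this]
    ring
  have hint : (∫ θ in (0:ℝ)..T, (Real.sin θ) ^ (d - 2)) ≤ T ^ (d - 1) / ((d:ℝ) - 1) := by
    have step1 : (∫ θ in (0:ℝ)..T, (Real.sin θ) ^ (d - 2)) ≤ ∫ θ in (0:ℝ)..T, θ ^ (d - 2) := by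
      apply intervalIntegral.integral_mono_on hT0
      · exact ((Real.continuous_sin.pow _)).intervalIntegrable _ _
      · exact (continuous_pow _).intervalIntegrable _ _
      · intro x hx
        exact pow_le_pow_left₀ (Real.sin_nonneg_of_nonneg_of_le_pi hx.1 (hx.2.trans hTpi))
          (Real.sin_le hx.1) _
    have step2 : (∫ θ in (0:ℝ)..T, θ ^ (d - 2)) = T ^ (d - 1) / ((d:ℝ) - 1) := by
      rw [integral_pow]
      have h1 : d - 2 + 1 = d - 1 := by omega
      have hcast2 : ((d - 2 : ℕ) : ℝ) + 1 = (d : ℝ) - 1 := by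
        push_cast [Nat.cast_sub (by omega : 2 ≤ d)]
        ring
      rw [h1, zero_pow (by omega : d - 1 ≠ 0), hcast2]
      ring
    linarith
  have hTd : T ^ (d - 1) ≤ (π ^ 2 / 2 * g) ^ p := by
    have e1 : T ^ (d - 1) = (T ^ 2) ^ p := by
      rw [← Real.rpow_natCast T (d - 1), hcast, ← Real.rpow_natCast T 2,
        ← Real.rpow_mul hT0]
      congr 1
      ring
    rw [e1]
    exact Real.rpow_le_rpow (sq_nonneg T) hT2 hp0.le
  have hpre : 0 ≤ ((d : ℝ) - 1) * kappa (d - 1) / ((d : ℝ) * kappa d) := by positivity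
  rw [s1, if_pos hg2, ← hT]
  calc (((d : ℝ) - 1) * kappa (d - 1) / ((d : ℝ) * kappa d)) *
      ∫ θ in (0:ℝ)..T, (Real.sin θ) ^ (d - 2)
      ≤ (((d : ℝ) - 1) * kappa (d - 1) / ((d : ℝ) * kappa d)) * ((π ^ 2 / 2 * g) ^ p / ((d:ℝ) - 1)) := by
        apply mul_le_mul_of_nonneg_left _ hpre
        exact hint.trans ((div_le_div_iff_of_pos_right (by linarith)).2 hTd)
    _ = (((d : ℝ) - 1) * kappa (d - 1) / ((d : ℝ) * kappa d)) / ((d : ℝ) - 1) *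
        (π ^ 2 / 2) ^ p * g ^ p := by
        rw [Real.mul_rpow (by positivity) hg0]
        ring

/-- for `α ∈ (0, 2/(d+1))`, `β = (2+α(d-1))/(4d)`,
`C₀ = (2^{(d-1)/2} κ_{d-1}/(d κ_d²))^{1/(2d)}` and `u_λ = C₀ λ^β`, there is a constant
`C > 0` (depending only on `d` and `α`) with `φ_{λ,α,u_λ}(h) ≤ C h^{(d-1)/2}` for all
`λ ≥ 1` and `h ∈ [0, u_λ²)`. -/
theorem phi_upper_bound_pos_subcritical (d : ℕ) (hd : 2 ≤ d) (al : ℝ)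
    (hal0 : 0 < al) (hal1 : al < 2 / ((d : ℝ) + 1)) :
    ∃ C > 0, ∀ lam : ℝ, 1 ≤ lam → ∀ h : ℝ, 0 ≤ h →
      h < (((2 : ℝ) ^ (((d : ℝ) - 1) / 2) * kappa (d - 1) / ((d : ℝ) * kappa d ^ 2)) ^
              ((1 : ℝ) / (2 * (d : ℝ))) *
            lam ^ ((2 + al * ((d : ℝ) - 1)) / (4 * (d : ℝ)))) ^ 2 →
      phi d lam al
          (((2 : ℝ) ^ (((d : ℝ) - 1) / 2) * kappa (d - 1) / ((d : ℝ) * kappa d ^ 2)) ^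
              ((1 : ℝ) / (2 * (d : ℝ))) *
            lam ^ ((2 + al * ((d : ℝ) - 1)) / (4 * (d : ℝ)))) h ≤
        C * h ^ (((d : ℝ) - 1) / 2) := by
  have hd1 : (1:ℝ) ≤ (d:ℝ) - 1 := by
    have : (2:ℝ) ≤ (d:ℝ) := by exact_mod_cast hd
    linarith
  have hk1 := kappa_pos (d - 1)
  have hk2 := kappa_pos d
  have hd0 : (0:ℝ) < d := by positivity
  set p : ℝ := ((d : ℝ) - 1) / 2 with hp
  have hp0 : 0 < p := by rw [hp]; linarith
  set K : ℝ := (2 : ℝ) ^ p * kappa (d - 1) / ((d : ℝ) * kappa d ^ 2) with hKdef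
  have hK : 0 < K :=
    div_pos (mul_pos (Real.rpow_pos_of_pos two_pos p) hk1) (mul_pos hd0 (pow_pos hk2 2))
  set c1 : ℝ := (((d : ℝ) - 1) * kappa (d - 1) / ((d : ℝ) * kappa d)) / ((d : ℝ) - 1) *
      (π ^ 2 / 2) ^ p with hc1def
  have hc1 : 0 < c1 := by
    apply mul_pos (div_pos (div_pos (mul_pos (by linarith) hk1) (mul_pos hd0 hk2)) (by linarith))
    exact Real.rpow_pos_of_pos (by positivity) p
  refine ⟨c1 * 2 ^ d / (kappa d * K),
    div_pos (mul_pos hc1 (pow_pos two_pos d)) (mul_pos hk2 hK), ?_⟩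
  intro lam hlam h hh0 hhu
  have hlam0 : (0:ℝ) < lam := lt_of_lt_of_le one_pos hlam
  set β : ℝ := (2 + al * ((d : ℝ) - 1)) / (4 * (d : ℝ)) with hβ
  set C₀ : ℝ := K ^ ((1 : ℝ) / (2 * (d : ℝ))) with hC₀
  have hC₀0 : 0 < C₀ := Real.rpow_pos_of_pos hK _
  set u : ℝ := C₀ * lam ^ β with hu
  have hu0 : 0 < u := mul_pos hC₀0 (Real.rpow_pos_of_pos hlam0 β)
  have hu2 : (0:ℝ) < u ^ 2 := pow_pos hu0 2
  set t : ℝ := h / u ^ 2 with ht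
  have ht0 : 0 ≤ t := div_nonneg hh0 hu2.le
  have ht1 : t < 1 := (div_lt_one hu2).2 hhu
  have h1t : 0 < 1 - t := by linarith
  have hla1 : (1:ℝ) ≤ lam ^ al := Real.one_le_rpow hlam hal0.le
  have hla0 : (0:ℝ) < lam ^ al := lt_of_lt_of_le one_pos hla1
  -- bounds on g
  set g : ℝ := gfun lam al u h with hg
  have hg0 : 0 ≤ g := le_min (le_max_right _ _) (by norm_num)
  have hg2 : g ≤ 2 := min_le_right _ _
  have hRHSnn : 0 ≤ lam ^ al * t / (1 - t) := div_nonneg (by positivity) h1t.le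
  have hgle : g ≤ lam ^ al * t / (1 - t) := by
    rw [hg, gfun]
    refine (min_le_left _ _).trans (max_le ?_ hRHSnn)
    rw [← ht]
    apply (div_le_div_iff_of_pos_right h1t).2
    have hsub : 0 ≤ (1 / 2) * (1 + lam ^ al) / u ^ 4 * h ^ 2 := by positivity
    have heq : lam ^ al / u ^ 2 * h = lam ^ al * t := by rw [ht]; ring
    linarith
  -- s1 bound
  have hs1 : s1 d g ≤ c1 * g ^ p := by
    have h0 := s1_le d hd hg0 hg2
    rw [← hp, ← hc1def] at h0
    exact h0
  have hgp : g ^ p ≤ (lam ^ al * t) ^ p / (1 - t) ^ p := by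
    rw [← Real.div_rpow (by positivity) h1t.le]
    exact Real.rpow_le_rpow hg0 hgle hp0.le
  have hcast : ((d - 1 : ℕ) : ℝ) = (d : ℝ) - 1 := by
    push_cast [Nat.cast_sub (by omega : 1 ≤ d)]
    ring
  have hfac : (1 - t) ^ (d - 1) = (1 - t) ^ p * (1 - t) ^ p := by
    rw [← Real.rpow_natCast (1 - t) (d - 1), ← Real.rpow_add h1t, hcast]
    congr 1
    rw [hp]; ring
  have h1tp : 0 < (1 - t) ^ p := Real.rpow_pos_of_pos h1t p
  have hXnn : 0 ≤ c1 * (lam ^ al * t) ^ p :=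
    mul_nonneg hc1.le (Real.rpow_nonneg (by positivity) p)
  have hchain : s1 d g * (1 - t) ^ (d - 1) ≤ c1 * (lam ^ al * t) ^ p := by
    calc s1 d g * (1 - t) ^ (d - 1)
        ≤ (c1 * ((lam ^ al * t) ^ p / (1 - t) ^ p)) * ((1 - t) ^ p * (1 - t) ^ p) := by
          rw [← hfac]
          exact mul_le_mul_of_nonneg_right
            (hs1.trans (mul_le_mul_of_nonneg_left hgp hc1.le)) (pow_nonneg h1t.le _)
      _ = c1 * (lam ^ al * t) ^ p * (1 - t) ^ p := by
          field_simp
      _ ≤ c1 * (lam ^ al * t) ^ p * 1 :=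
          mul_le_mul_of_nonneg_left (Real.rpow_le_one h1t.le (by linarith) hp0.le) hXnn
      _ = c1 * (lam ^ al * t) ^ p := mul_one _
  -- unfold phi
  simp only [phi]
  rw [← ht, ← hg]
  set A : ℝ := lam * (1 + lam ^ al) ^ d / u ^ (d + 1) / (kappa d * lam ^ ((d : ℝ) * al))
    with hA
  have hA0 : 0 ≤ A := by
    rw [hA]
    have := Real.rpow_pos_of_pos hlam0 ((d : ℝ) * al)
    positivity
  have hsplit : (lam ^ al * t) ^ p = lam ^ (al * p) * (h ^ p / u ^ (d - 1)) := by
    rw [ht, Real.mul_rpow hla0.le (div_nonneg hh0 hu2.le), Real.div_rpow hh0 (by positivity)]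
    congr 1
    · rw [← Real.rpow_mul hlam0.le]
    · congr 1
      rw [← Real.rpow_natCast u 2, ← Real.rpow_mul hu0.le, ← Real.rpow_natCast u (d - 1),
        hcast]
      congr 1
      rw [hp]; push_cast; ring
  have hdal : lam ^ ((d : ℝ) * al) = (lam ^ al) ^ d := by
    rw [← Real.rpow_natCast (lam ^ al) d, ← Real.rpow_mul hlam0.le]
    congr 1
    ring
  have hu2d : u ^ (d + 1) * u ^ (d - 1) = K * (lam * lam ^ (al * p)) := by
    rw [← pow_add, (by omega : d + 1 + (d - 1) = 2 * d), hu, mul_pow]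
    congr 1
    · rw [hC₀, ← Real.rpow_natCast (K ^ ((1 : ℝ) / (2 * (d : ℝ)))) (2 * d),
        ← Real.rpow_mul hK.le]
      rw [show (1 : ℝ) / (2 * (d : ℝ)) * ((2 * d : ℕ) : ℝ) = 1 by
        push_cast; field_simp]
      exact Real.rpow_one K
    · rw [← Real.rpow_natCast (lam ^ β) (2 * d), ← Real.rpow_mul hlam0.le,
        show lam * lam ^ (al * p) = lam ^ (1 + al * p) by
          rw [Real.rpow_add hlam0, Real.rpow_one]]
      congr 1
      rw [hβ, hp]
      push_cast
      field_simp
      ring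
  have hQ : (1 + lam ^ al) ^ d / (lam ^ al) ^ d ≤ 2 ^ d := by
    rw [div_le_iff₀ (by positivity)]
    calc (1 + lam ^ al) ^ d ≤ (2 * lam ^ al) ^ d :=
          pow_le_pow_left₀ (by positivity) (by linarith) d
      _ = 2 ^ d * (lam ^ al) ^ d := mul_pow _ _ _
  clear_value A g t u C₀ β c1 K p
  have hE : A * c1 * lam ^ (al * p) / u ^ (d - 1)
      = c1 * ((1 + lam ^ al) ^ d / (lam ^ al) ^ d) / (kappa d * K) := by
    rw [hA, hdal]
    have hun1 : (u : ℝ) ^ (d + 1) ≠ 0 := by positivity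
    have hun2 : (u : ℝ) ^ (d - 1) ≠ 0 := by positivity
    field_simp
    linear_combination (-1 : ℝ) * hu2d
  have hcoef : A * c1 * lam ^ (al * p) / u ^ (d - 1) ≤ c1 * 2 ^ d / (kappa d * K) := by
    rw [hE]
    exact (div_le_div_iff_of_pos_right (mul_pos hk2 hK)).2
      (mul_le_mul_of_nonneg_left hQ hc1.le)
  calc A * s1 d g * (1 - t) ^ (d - 1) = A * (s1 d g * (1 - t) ^ (d - 1)) := mul_assoc _ _ _
    _ ≤ A * (c1 * (lam ^ al * t) ^ p) := mul_le_mul_of_nonneg_left hchain hA0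
    _ = (A * c1 * lam ^ (al * p) / u ^ (d - 1)) * h ^ p := by rw [hsplit]; ring
    _ ≤ c1 * 2 ^ d / (kappa d * K) * h ^ p :=
        mul_le_mul_of_nonneg_right hcoef (Real.rpow_nonneg hh0 p)
end
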